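/- Proportional fairness of the Nash bargaining solution: let S ⊆ ℝ^K be a nonempty compact convex set, δ ∈ ℝ^K, and suppose x* ∈ S satisfies x*_i > δ_i for all i and maximizes ∏_{i=1}^{K}(x_i − δ_i) over {x ∈ S : x_i ≥ δ_i for all i}. Then for every y ∈ S with y_i ≥ δ_i for all i, Σ_{i=1}^{K} (y_i − x*_i)/(x*_i − δ_i) ≤ 0. -/

import Mathlib

open Topology Filter


/-- Proportional fairness of the Nash bargaining solution: if `x* ∈ S`
strictly dominates the disagreement point `δ` and maximizes the Nash product
`∏ i (x i − δ i)` over the feasible set, then for every feasible `y`,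
`∑ i (y i − x* i)/(x* i − δ i) ≤ 0`. -/
theorem nash_bargaining_solution_proportionally_fair
    (K : ℕ)
    (S : Set (Fin K → ℝ)) (hS : S.Nonempty)
    (hScompact : IsCompact S) (hSconvex : Convex ℝ S)
    (δ : Fin K → ℝ)
    (xstar : Fin K → ℝ) (hxS : xstar ∈ S)
    (hxstrict : ∀ i, δ i < xstar i)
    (hxmax : ∀ y ∈ S, (∀ i, δ i ≤ y i) →
      (∏ i, (y i - δ i)) ≤ ∏ i, (xstar i - δ i)) :
    ∀ y ∈ S, (∀ i, δ i ≤ y i) →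
      (∑ i, (y i - xstar i) / (xstar i - δ i)) ≤ 0 := by
  intro y hyS hyδ
  set a : Fin K → ℝ := fun i => xstar i - δ i with ha
  set b : Fin K → ℝ := fun i => y i - xstar i with hb
  have hapos : ∀ i, 0 < a i := fun i => sub_pos.mpr (hxstrict i)
  set f : ℝ → ℝ := fun t => ∏ i, (a i + t * b i) with hf
  -- derivative of f at 0
  have hderiv : HasDerivAt f (∑ i, (∏ j ∈ Finset.univ.erase i, a j) * b i) 0 := by
    have := HasDerivAt.fun_finsetProd (x := (0:ℝ)) (u := Finset.univ)
      (f := fun i t => a i + t * b i) (f' := b)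
      (fun i _ => by
        simpa using ((hasDerivAt_id (0:ℝ)).mul_const (b i)).const_add (a i))
    simpa using this
  set D : ℝ := ∑ i, (∏ j ∈ Finset.univ.erase i, a j) * b i with hD
  -- f t ≤ f 0 for t ∈ (0,1)
  have hle : ∀ t ∈ Set.Ioo (0:ℝ) 1, f t ≤ f 0 := by
    intro t ht
    have hz : (fun i => xstar i + t * (y i - xstar i)) ∈ S := by
      have := hSconvex hxS hyS (by linarith [ht.1, ht.2] : (0:ℝ) ≤ 1 - t)
        (le_of_lt ht.1) (by ring)
      convert this using 1
      funext i; simp; ring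
    have hzδ : ∀ i, δ i ≤ xstar i + t * (y i - xstar i) := by
      intro i
      nlinarith [mul_nonneg (by linarith [ht.2] : (0:ℝ) ≤ 1 - t) (by linarith [hxstrict i] : (0:ℝ) ≤ xstar i - δ i),
        mul_nonneg ht.1.le (by linarith [hyδ i] : (0:ℝ) ≤ y i - δ i)]
    have := hxmax _ hz hzδ
    calc f t = ∏ i, ((xstar i + t * (y i - xstar i)) - δ i) := by
          apply Finset.prod_congr rfl; intro i _; simp [ha, hb]; ring
      _ ≤ ∏ i, (xstar i - δ i) := this
      _ = f 0 := by apply (Finset.prod_congr rfl _).symm; intro i _; simp [ha]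
  -- D ≤ 0 via slope argument
  have hDnonpos : D ≤ 0 := by
    have hdw : HasDerivWithinAt f D (Set.Ioi 0) 0 := hderiv.hasDerivWithinAt
    have hslope := hasDerivWithinAt_iff_tendsto_slope.mp hdw
    have : Set.Ioi (0:ℝ) \ {0} = Set.Ioi 0 := by
      ext t; simp
    rw [show (Set.Ioi (0:ℝ) \ {0}) = Set.Ioi 0 from this] at hslope
    refine le_of_tendsto hslope ?_
    filter_upwards [Ioo_mem_nhdsGT (zero_lt_one (α := ℝ))] with t ht
    have h1 := hle t ht
    have : slope f 0 t = (f t - f 0) / t := by simp [slope_def_field]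
    rw [this]
    exact div_nonpos_of_nonpos_of_nonneg (by linarith) ht.1.le
  -- rewrite D
  have hprodpos : 0 < ∏ i, a i := Finset.prod_pos (fun i _ => hapos i)
  have hDeq : D = (∏ i, a i) * ∑ i, b i / a i := by
    rw [hD, Finset.mul_sum]
    apply Finset.sum_congr rfl
    intro i hi
    have h : (∏ i, a i) = (∏ j ∈ Finset.univ.erase i, a j) * a i :=
      (Finset.prod_erase_mul Finset.univ a (Finset.mem_univ i)).symm
    rw [h]
    rw [mul_assoc, show a i * (b i / a i) = b i from by
      rw [mul_comm, div_mul_cancel₀ _ (hapos i).ne']]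
  have hsum : ∑ i, b i / a i ≤ 0 := by
    by_contra h
    push_neg at h
    nlinarith [mul_pos hprodpos h]
  exact hsum
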